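/- Let d ≥ 2 be a natural number and 1 < α < 2 a real number. Then (p/(d−α)) κ_{(d−α)/p} → ν⋆ as p → ∞, i.e. the function p ↦ (p/(d−α)) · 2^α Γ(((d−α)/p + α)/2) Γ((d − (d−α)/p)/2) / (Γ((d−α)/(2p)) Γ((d − (d−α)/p − α)/2)) tends to ν⋆ := 2^{α−1} Γ(α/2) Γ(d/2) / Γ((d−α)/2) as p → +∞. -/

import Mathlib

/-- `κ_β := 2^α Γ((β+α)/2) Γ((d−β)/2) / (Γ(β/2) Γ((d−β−α)/2))`. -/
noncomputable def kappa (d : ℕ) (α β : ℝ) : ℝ :=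
  2 ^ α * Real.Gamma ((β + α) / 2) * Real.Gamma (((d : ℝ) - β) / 2) /
    (Real.Gamma (β / 2) * Real.Gamma (((d : ℝ) - β - α) / 2))

/-- `ν⋆ = 2^{α−1} Γ(α/2) Γ(d/2) / Γ((d−α)/2)`. -/
noncomputable def nuStar (d : ℕ) (α : ℝ) : ℝ :=
  2 ^ (α - 1) * Real.Gamma (α / 2) * Real.Gamma ((d : ℝ) / 2) /
    Real.Gamma (((d : ℝ) - α) / 2)

lemma gammaContAt (x : ℝ) (hx : 0 < x) : ContinuousAt Real.Gamma x := by
  apply (Real.differentiableAt_Gamma _).continuousAt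
  intro m
  have : (0:ℝ) ≤ m := Nat.cast_nonneg m
  intro h; rw [h] at hx; linarith

/-- `(p/(d−α)) κ_{(d−α)/p} → ν⋆` as `p → ∞`. -/
theorem stmt_8 (d : ℕ) (hd : 2 ≤ d) (α : ℝ) (hα1 : 1 < α) (hα2 : α < 2) :
    Filter.Tendsto (fun p : ℝ => p / ((d : ℝ) - α) * kappa d α (((d : ℝ) - α) / p))
      Filter.atTop (nhds (nuStar d α)) := by
  have hd2 : (2:ℝ) ≤ (d:ℝ) := by exact_mod_cast hd
  have hdα : (0:ℝ) < (d:ℝ) - α := by linarith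
  set h : ℝ → ℝ := fun b =>
    2 ^ α * Real.Gamma ((b + α) / 2) * Real.Gamma (((d : ℝ) - b) / 2) /
      (2 * Real.Gamma (b / 2 + 1) * Real.Gamma (((d : ℝ) - b - α) / 2)) with hh
  have hβ : Filter.Tendsto (fun p : ℝ => ((d:ℝ) - α) / p) Filter.atTop (nhds 0) := by
    simpa [div_eq_mul_inv] using tendsto_inv_atTop_zero.const_mul ((d:ℝ) - α)
  have hcont : ContinuousAt h 0 := by
    apply ContinuousAt.div
    · apply ContinuousAt.mul
      · apply ContinuousAt.mul continuousAt_const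
        exact (gammaContAt _ (by norm_num; linarith)).comp (by fun_prop)
      · exact (gammaContAt _ (by norm_num; linarith)).comp (by fun_prop)
    · apply ContinuousAt.mul
      · apply ContinuousAt.mul continuousAt_const
        exact (gammaContAt _ (by norm_num)).comp (by fun_prop)
      · exact (gammaContAt _ (by norm_num; linarith)).comp (by fun_prop)
    · have h1 : Real.Gamma ((0:ℝ) / 2 + 1) = 1 := by norm_num [Real.Gamma_one]
      have h2 : 0 < Real.Gamma (((d:ℝ) - 0 - α) / 2) :=
        Real.Gamma_pos_of_pos (by linarith)
      positivity
  have h0 : h 0 = nuStar d α := by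
    have h1 : Real.Gamma ((0:ℝ) / 2 + 1) = 1 := by norm_num [Real.Gamma_one]
    have h2 : (2:ℝ) ^ (α - 1) = 2 ^ α / 2 := by
      rw [Real.rpow_sub (by norm_num), Real.rpow_one]
    simp only [hh, nuStar, h1, h2, zero_add, sub_zero, mul_one]
    ring
  have key := (hcont.tendsto.comp hβ)
  rw [h0] at key
  apply key.congr'
  filter_upwards [Filter.eventually_gt_atTop (1:ℝ)] with p hp
  have hp0 : 0 < p := by linarith
  set b := ((d:ℝ) - α) / p with hb
  have hbpos : 0 < b := div_pos hdα hp0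
  have hblt : b < (d:ℝ) - α := by
    rw [hb, div_lt_iff₀ hp0]
    nlinarith
  have hG1 : Real.Gamma (b / 2 + 1) = (b / 2) * Real.Gamma (b / 2) := by
    rw [Real.Gamma_add_one (by positivity)]
  have hG1pos : 0 < Real.Gamma (b / 2) := Real.Gamma_pos_of_pos (by positivity)
  have hG2pos : 0 < Real.Gamma (((d:ℝ) - b - α) / 2) :=
    Real.Gamma_pos_of_pos (by linarith)
  have hpd : p / ((d:ℝ) - α) = b⁻¹ := by rw [hb, inv_div]
  show h b = p / ((d:ℝ) - α) * kappa d α b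
  simp only [hh, kappa, hG1, hpd]
  field_simp
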